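/- Assume the incompatible Korn inequality: there is C_K > 0 such that ‖X‖²_{L²} ≤ C_K(‖sym X‖²_{L²} + ‖Curl X‖²_{L²}) for all X in Q := H₀(Curl; Ω, Γ_D, ℝ^{3×3}). Then the map ‖(q, X)‖²_* := ‖q − X‖²_{L²} + ‖sym q‖²_{L²} + ‖Curl X‖²_{L²} defines a norm on P × Q, where P = L²(Ω, sl(3)). In particular, if ‖(q,X)‖_* = 0 then q = 0 and X = 0. -/

import Mathlib

noncomputable section

lemma l2_tri (a₁ a₂ a₃ b₁ b₂ b₃ c₁ c₂ c₃ : ℝ)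
    (ha₁ : 0 ≤ a₁) (ha₂ : 0 ≤ a₂) (ha₃ : 0 ≤ a₃)
    (hb₁ : 0 ≤ b₁) (hb₂ : 0 ≤ b₂) (hb₃ : 0 ≤ b₃)
    (hc₁ : 0 ≤ c₁) (hc₂ : 0 ≤ c₂) (hc₃ : 0 ≤ c₃)
    (h₁ : a₁ ≤ b₁ + c₁) (h₂ : a₂ ≤ b₂ + c₂) (h₃ : a₃ ≤ b₃ + c₃) :
    Real.sqrt (a₁ ^ 2 + a₂ ^ 2 + a₃ ^ 2) ≤
      Real.sqrt (b₁ ^ 2 + b₂ ^ 2 + b₃ ^ 2) + Real.sqrt (c₁ ^ 2 + c₂ ^ 2 + c₃ ^ 2) := by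
  set u : EuclideanSpace ℝ (Fin 3) := WithLp.toLp 2 ![b₁, b₂, b₃]
  set v : EuclideanSpace ℝ (Fin 3) := WithLp.toLp 2 ![c₁, c₂, c₃]
  have hnu : ‖u‖ = Real.sqrt (b₁ ^ 2 + b₂ ^ 2 + b₃ ^ 2) := by
    rw [EuclideanSpace.norm_eq]
    simp [u, Fin.sum_univ_three, sq_abs, add_assoc]
  have hnv : ‖v‖ = Real.sqrt (c₁ ^ 2 + c₂ ^ 2 + c₃ ^ 2) := by
    rw [EuclideanSpace.norm_eq]
    simp [v, Fin.sum_univ_three, sq_abs, add_assoc]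
  have hnuv : ‖u + v‖ = Real.sqrt ((b₁ + c₁) ^ 2 + (b₂ + c₂) ^ 2 + (b₃ + c₃) ^ 2) := by
    rw [EuclideanSpace.norm_eq]
    have : ∀ i, (u + v) i = ![b₁ + c₁, b₂ + c₂, b₃ + c₃] i := by
      intro i; fin_cases i <;> simp [u, v]
    simp only [this]
    simp [Fin.sum_univ_three, sq_abs, add_assoc]
  calc Real.sqrt (a₁ ^ 2 + a₂ ^ 2 + a₃ ^ 2)
      ≤ Real.sqrt ((b₁ + c₁) ^ 2 + (b₂ + c₂) ^ 2 + (b₃ + c₃) ^ 2) := by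
        apply Real.sqrt_le_sqrt
        gcongr
    _ = ‖u + v‖ := hnuv.symm
    _ ≤ ‖u‖ + ‖v‖ := norm_add_le u v
    _ = _ := by rw [hnu, hnv]

/-- Abstract formalization: `V` plays the role of `L²(Ω, ℝ^{3×3})` (containing
`P = L²(Ω, sl(3))` as the ambient space of the `q`-variable), `Q` the role of
`H₀(Curl; Ω, Γ_D, ℝ^{3×3})` with inclusion `ι : Q → V`, `symL` the pointwise
symmetric part and `curl` the row-wise Curl. -/
theorem stmt_10 {V W Q : Type*}
    [NormedAddCommGroup V] [InnerProductSpace ℝ V]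
    [NormedAddCommGroup W] [InnerProductSpace ℝ W]
    [NormedAddCommGroup Q] [InnerProductSpace ℝ Q]
    (ι : Q →ₗ[ℝ] V) (hι : Function.Injective ι)
    (symL : V →ₗ[ℝ] V) (curl : Q →ₗ[ℝ] W)
    (C_K : ℝ) (hCK : 0 < C_K)
    (hKorn : ∀ X : Q, ‖ι X‖ ^ 2 ≤ C_K * (‖symL (ι X)‖ ^ 2 + ‖curl X‖ ^ 2)) :
    -- ‖(q,X)‖_* := √(‖q − X‖² + ‖sym q‖² + ‖Curl X‖²) is a norm on P × Q:
    (∀ q : V, ∀ X : Q,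
        Real.sqrt (‖q - ι X‖ ^ 2 + ‖symL q‖ ^ 2 + ‖curl X‖ ^ 2) = 0 ↔ q = 0 ∧ X = 0) ∧
    (∀ (a : ℝ) (q : V) (X : Q),
        Real.sqrt (‖a • q - ι (a • X)‖ ^ 2 + ‖symL (a • q)‖ ^ 2 + ‖curl (a • X)‖ ^ 2) =
          |a| * Real.sqrt (‖q - ι X‖ ^ 2 + ‖symL q‖ ^ 2 + ‖curl X‖ ^ 2)) ∧
    (∀ (q q' : V) (X X' : Q),
        Real.sqrt (‖(q + q') - ι (X + X')‖ ^ 2 + ‖symL (q + q')‖ ^ 2 + ‖curl (X + X')‖ ^ 2) ≤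
          Real.sqrt (‖q - ι X‖ ^ 2 + ‖symL q‖ ^ 2 + ‖curl X‖ ^ 2) +
            Real.sqrt (‖q' - ι X'‖ ^ 2 + ‖symL q'‖ ^ 2 + ‖curl X'‖ ^ 2)) := by
  refine ⟨?_, ?_, ?_⟩
  · intro q X
    constructor
    · intro h
      have hA : ‖q - ι X‖ ^ 2 + ‖symL q‖ ^ 2 + ‖curl X‖ ^ 2 = 0 := by
        have h' := Real.sqrt_eq_zero'.mp h
        nlinarith [sq_nonneg ‖q - ι X‖, sq_nonneg ‖symL q‖, sq_nonneg ‖curl X‖]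
      have h1 : ‖q - ι X‖ = 0 := by nlinarith [sq_nonneg ‖q - ι X‖, sq_nonneg ‖symL q‖, sq_nonneg ‖curl X‖]
      have h2 : ‖symL q‖ = 0 := by nlinarith [sq_nonneg ‖q - ι X‖, sq_nonneg ‖symL q‖, sq_nonneg ‖curl X‖]
      have h3 : ‖curl X‖ = 0 := by nlinarith [sq_nonneg ‖q - ι X‖, sq_nonneg ‖symL q‖, sq_nonneg ‖curl X‖]
      have hq : q = ι X := sub_eq_zero.mp (norm_eq_zero.mp h1)
      have hsym : symL (ι X) = 0 := by rw [← hq]; exact norm_eq_zero.mp h2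
      have hcx : curl X = 0 := norm_eq_zero.mp h3
      have hX0 : ι X = 0 := by
        have := hKorn X
        rw [hsym, hcx] at this
        simp at this
        have : ‖ι X‖ ^ 2 ≤ 0 := by simpa using this
        have : ‖ι X‖ = 0 := by nlinarith [norm_nonneg (ι X)]
        exact norm_eq_zero.mp this
      have hX : X = 0 := hι (by simpa using hX0)
      exact ⟨by rw [hq, hX0], hX⟩
    · rintro ⟨rfl, rfl⟩
      simp
  · intro a q X
    have h1 : ‖a • q - ι (a • X)‖ = |a| * ‖q - ι X‖ := by
      rw [map_smul, ← smul_sub, norm_smul, Real.norm_eq_abs]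
    have h2 : ‖symL (a • q)‖ = |a| * ‖symL q‖ := by
      rw [map_smul, norm_smul, Real.norm_eq_abs]
    have h3 : ‖curl (a • X)‖ = |a| * ‖curl X‖ := by
      rw [map_smul, norm_smul, Real.norm_eq_abs]
    rw [h1, h2, h3]
    rw [mul_pow, mul_pow, mul_pow, ← mul_add, ← mul_add, Real.sqrt_mul (by positivity),
      Real.sqrt_sq (abs_nonneg a)]
  · intro q q' X X'
    apply l2_tri <;> try positivity
    · calc ‖(q + q') - ι (X + X')‖ = ‖(q - ι X) + (q' - ι X')‖ := by rw [map_add]; congr 1; abel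
        _ ≤ _ := norm_add_le _ _
    · rw [map_add]; exact norm_add_le _ _
    · rw [map_add]; exact norm_add_le _ _
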